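/- Every path with an odd number of vertices (i.e., even length) is a dominating graph; in particular, for all 2 ≤ m ≤ n with n odd, t_{P_n}(W)^{1/(n-1)} ≥ t_{P_m}(W)^{1/(m-1)} for every graphon W, where P_k denotes the path on k vertices. -/

import Mathlib

open MeasureTheory
open scoped Classical

noncomputable section

/-- A graphon: a symmetric measurable function `[0,1]² → [0,1]` (extended to `ℝ²`). -/
structure Graphon where
  toFun : ℝ → ℝ → ℝ
  symm : ∀ x y, toFun x y = toFun y x
  measurable' : Measurable (Function.uncurry toFun)
  nonneg : ∀ x y, 0 ≤ toFun x y
  le_one : ∀ x y, toFun x y ≤ 1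

/-- The number of edges of a finite simple graph. -/
def SimpleGraph.edgeCard {V : Type} [Fintype V] (H : SimpleGraph V) : ℕ :=
  H.edgeSet.toFinset.card

/-- The homomorphism density `t_H(W)` of a graph `H` in a graphon `W`. -/
def homDensity {V : Type} [Fintype V] (H : SimpleGraph V) (W : Graphon) : ℝ :=
  ∫ x in (Set.univ.pi fun _ : V => Set.Icc (0:ℝ) 1),
    ∏ e ∈ H.edgeSet.toFinset,
      Sym2.lift ⟨fun i j => W.toFun (x i) (x j), fun i j => W.symm (x i) (x j)⟩ e

/-- The homomorphism density of an edge subset `J` (of a graph on vertex set `V`). -/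
def subDensity {V : Type} [Fintype V] (J : Finset (Sym2 V)) (W : Graphon) : ℝ :=
  ∫ x in (Set.univ.pi fun _ : V => Set.Icc (0:ℝ) 1),
    ∏ e ∈ J,
      Sym2.lift ⟨fun i j => W.toFun (x i) (x j), fun i j => W.symm (x i) (x j)⟩ e

/-- `H` dominates `H'`: `t_H(W)^{1/e(H)} ≥ t_{H'}(W)^{1/e(H')}` for every graphon `W`. -/
def Dominates {V V' : Type} [Fintype V] [Fintype V']
    (H : SimpleGraph V) (H' : SimpleGraph V') : Prop :=
  ∀ W : Graphon,
    homDensity H' W ^ ((1 : ℝ) / H'.edgeCard) ≤ homDensity H W ^ ((1 : ℝ) / H.edgeCard)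

/-- `H'` is (isomorphic to) a subgraph of `H`. -/
def IsSubgraphOf {V V' : Type} (H' : SimpleGraph V') (H : SimpleGraph V) : Prop :=
  ∃ f : H' →g H, Function.Injective f

/-- `H` is dominating: it dominates all of its subgraphs with at least one edge. -/
def IsDominating {V : Type} [Fintype V] (H : SimpleGraph V) : Prop :=
  ∀ (V' : Type) [Fintype V'] (H' : SimpleGraph V'),
    IsSubgraphOf H' H → 1 ≤ H'.edgeCard → Dominates H H'

/-- The disjoint union of `r` copies of `H`. -/
def nCopies {V : Type} (H : SimpleGraph V) (r : ℕ) : SimpleGraph (V × Fin r) where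
  Adj a b := a.2 = b.2 ∧ H.Adj a.1 b.1
  symm := ⟨fun a b h => ⟨h.1.symm, h.2.symm⟩⟩
  loopless := ⟨fun a h => SimpleGraph.irrefl H h.2⟩

/-- The disjoint union of two graphs. -/
def disjUnion {V₁ V₂ : Type} (H₁ : SimpleGraph V₁) (H₂ : SimpleGraph V₂) :
    SimpleGraph (V₁ ⊕ V₂) where
  Adj a b := match a, b with
    | .inl a, .inl b => H₁.Adj a b
    | .inr a, .inr b => H₂.Adj a b
    | _, _ => False
  symm := ⟨by rintro (a|a) (b|b) h <;> simp_all <;> exact h.symm⟩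
  loopless := ⟨by rintro (a|a) h <;> exact (SimpleGraph.irrefl _) h⟩

/-- A cut involution of `H`: an involutive automorphism whose fixed set is a vertex
cut separating `L` and `R`, which are swapped by the involution, with no edges
between `L` and `R`. -/
structure CutInvolution {V : Type} (H : SimpleGraph V) where
  toEquiv : V ≃ V
  adj_iff : ∀ v w, H.Adj (toEquiv v) (toEquiv w) ↔ H.Adj v w
  invol : ∀ v, toEquiv (toEquiv v) = v
  L : Set V
  R : Set V
  disj : Disjoint L R
  cover : ∀ v, toEquiv v ≠ v → v ∈ L ∨ v ∈ R
  not_fixed : ∀ v ∈ L ∪ R, toEquiv v ≠ v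
  maps : ∀ v ∈ L, toEquiv v ∈ R
  no_edge : ∀ v ∈ L, ∀ w ∈ R, ¬ H.Adj v w
  L_nonempty : L.Nonempty
  R_nonempty : R.Nonempty

/-- The left-folding map `φ⁺` of a cut involution. -/
def CutInvolution.plusMap {V : Type} {H : SimpleGraph V} (c : CutInvolution H) : V → V :=
  fun v => if v ∈ c.R then c.toEquiv v else v

/-- The right-folding map `φ⁻` of a cut involution. -/
def CutInvolution.minusMap {V : Type} {H : SimpleGraph V} (c : CutInvolution H) : V → V :=
  fun v => if v ∈ c.L then c.toEquiv v else v

/-- `J(ψ) = {e ∈ E(H) : ψ(e) ∈ J}` for a (half-folding) map `ψ` on vertices. -/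
def foldSet {V : Type} [Fintype V] (H : SimpleGraph V) (J : Finset (Sym2 V)) (ψ : V → V) :
    Finset (Sym2 V) :=
  H.edgeSet.toFinset.filter (fun e => Sym2.map ψ e ∈ J)

/-- The number of homomorphisms from `H` to `G`. -/
def homCount {V U : Type} [Fintype V] [Fintype U]
    (H : SimpleGraph V) (G : SimpleGraph U) : ℕ :=
  Nat.card (H →g G)

/-- The homomorphism density `t_H(G)` for finite graphs. -/
def homDensityG {V U : Type} [Fintype V] [Fintype U]
    (H : SimpleGraph V) (G : SimpleGraph U) : ℝ :=
  (homCount H G : ℝ) / (Fintype.card U : ℝ) ^ (Fintype.card V)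

/-- The tensor (categorical) product of two graphs. -/
def tensorProd {V U : Type} (H : SimpleGraph V) (K : SimpleGraph U) :
    SimpleGraph (V × U) where
  Adj a b := H.Adj a.1 b.1 ∧ K.Adj a.2 b.2
  symm := ⟨fun a b h => ⟨h.1.symm, h.2.symm⟩⟩
  loopless := ⟨fun a h => SimpleGraph.irrefl H h.1⟩

/-- The auxiliary graph `G*` on ordered `m`-tuples of vertices of `G`, with `a ~ a'`
iff every coordinate of `a` is adjacent in `G` to every coordinate of `a'`. -/
def auxPower {U : Type} (G : SimpleGraph U) (m : ℕ) (hm : 1 ≤ m) :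
    SimpleGraph (Fin m → U) where
  Adj a b := ∀ i j, G.Adj (a i) (b j)
  symm := ⟨fun a b h i j => (h j i).symm⟩
  loopless := ⟨fun a h => SimpleGraph.irrefl G (h ⟨0, hm⟩ ⟨0, hm⟩)⟩

/-- The graph `C₆⁺`: a 6-cycle on vertices `0,…,5` together with a central vertex `6`
joined to the alternating vertices `0, 2, 4`. -/
def C6plus : SimpleGraph (Fin 7) := SimpleGraph.fromRel (fun a b =>
  (a.1 < 6 ∧ b.1 < 6 ∧ b.1 % 6 = (a.1 + 1) % 6) ∨ (a = 6 ∧ (b = 0 ∨ b = 2 ∨ b = 4)))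

end

namespace PathDom
open MeasureTheory Real Set

noncomputable def mu : Measure ℝ := volume.restrict (Set.Icc 0 1)

instance : IsProbabilityMeasure (mu) := by
  constructor
  simp [mu, Real.volume_Icc]

lemma integrable_bd {α : Type*} [MeasurableSpace α] (ν : Measure α) [IsFiniteMeasure ν]
    {g : α → ℝ} (hg : Measurable g) (h0 : ∀ x, 0 ≤ g x) (h1 : ∀ x, g x ≤ 1) :
    Integrable g ν := by
  refine Integrable.mono' (integrable_const 1) hg.aestronglyMeasurable ?_
  filter_upwards with x
  rw [Real.norm_eq_abs, abs_of_nonneg (h0 x)]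
  exact h1 x

variable (W : Graphon)

noncomputable def ff : ℕ → ℝ → ℝ
  | 0 => fun _ => 1
  | (k+1) => fun x => ∫ y, W.toFun x y * ff k y ∂mu

lemma ff_meas : ∀ k, Measurable (ff W k)
  | 0 => measurable_const
  | (k+1) => by
      have h : Measurable (fun p : ℝ × ℝ => W.toFun p.1 p.2 * ff W k p.2) :=
        W.measurable'.mul ((ff_meas k).comp measurable_snd)
      exact (h.stronglyMeasurable.integral_prod_right').measurable

lemma ff_nonneg : ∀ k x, 0 ≤ ff W k x
  | 0, x => zero_le_one
  | (k+1), x => by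
      refine integral_nonneg fun y => ?_
      exact mul_nonneg (W.nonneg _ _) (ff_nonneg k y)

lemma ff_le_one : ∀ k x, ff W k x ≤ 1
  | 0, x => le_refl 1
  | (k+1), x => by
      have h1 : Integrable (fun y => W.toFun x y * ff W k y) mu := by
        refine integrable_bd _ ((W.measurable'.comp (measurable_prodMk_left)).mul (ff_meas W k))
          (fun y => mul_nonneg (W.nonneg _ _) (ff_nonneg W k y))
          (fun y => mul_le_one₀ (W.le_one _ _) (ff_nonneg W k y) (ff_le_one k y))
      calc ∫ y, W.toFun x y * ff W k y ∂mu ≤ ∫ _, (1:ℝ) ∂mu := by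
              refine integral_mono h1 (integrable_const 1) fun y => ?_
              exact mul_le_one₀ (W.le_one _ _) (ff_nonneg W k y) (ff_le_one k y)
        _ = 1 := by simp

lemma ff_integrable (k : ℕ) : Integrable (ff W k) mu :=
  integrable_bd _ (ff_meas W k) (ff_nonneg W k) (ff_le_one W k)

/-- inner products of iterates -/
noncomputable def pp (a b : ℕ) : ℝ := ∫ x, ff W a x * ff W b x ∂mu

/-- the path moments: `aa k = t_{P_{k+1}}` -/
noncomputable def aa (k : ℕ) : ℝ := ∫ x, ff W k x ∂mu

lemma pp_zero (b : ℕ) : pp W 0 b = aa W b := by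
  unfold pp aa
  simp [ff]

lemma pp_comm (a b : ℕ) : pp W a b = pp W b a := by
  unfold pp
  simp_rw [mul_comm]

lemma prod_integrable_ab (a b : ℕ) :
    Integrable (fun z : ℝ × ℝ => W.toFun z.1 z.2 * ff W a z.1 * ff W b z.2) (mu.prod mu) := by
  refine integrable_bd _ ?_ ?_ ?_
  · exact (W.measurable'.mul ((ff_meas W a).comp measurable_fst)).mul
      ((ff_meas W b).comp measurable_snd)
  · exact fun z => mul_nonneg (mul_nonneg (W.nonneg _ _) (ff_nonneg W a _)) (ff_nonneg W b _)
  · exact fun z => mul_le_one₀ (mul_le_one₀ (W.le_one _ _) (ff_nonneg W a _) (ff_le_one W a _))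
      (ff_nonneg W b _) (ff_le_one W b _)

lemma pp_succ (a b : ℕ) : pp W (a+1) b = pp W a (b+1) := by
  have key : ∀ c d : ℕ, pp W (c+1) d =
      ∫ x, ∫ y, W.toFun y x * ff W c y * ff W d x ∂mu ∂mu := by
    intro c d
    unfold pp
    show (∫ x, (∫ y, W.toFun x y * ff W c y ∂mu) * ff W d x ∂mu) = _
    congr 1
    ext x
    rw [← integral_mul_const]
    congr 1
    ext y
    rw [W.symm x y]
  rw [key a b, pp_comm, key b a]
  rw [integral_integral_swap]
  · congr 1; ext x; congr 1; ext y
    rw [W.symm y x]; ring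
  · refine integrable_bd _ ?_ ?_ ?_
    · show Measurable fun z : ℝ × ℝ => W.toFun z.2 z.1 * ff W a z.2 * ff W b z.1
      exact ((W.measurable'.comp measurable_swap).mul ((ff_meas W a).comp measurable_snd)).mul
        ((ff_meas W b).comp measurable_fst)
    · exact fun z => mul_nonneg (mul_nonneg (W.nonneg _ _) (ff_nonneg W a _)) (ff_nonneg W b _)
    · exact fun z => mul_le_one₀ (mul_le_one₀ (W.le_one _ _) (ff_nonneg W a _) (ff_le_one W a _))
        (ff_nonneg W b _) (ff_le_one W b _)

lemma pp_eq_aa (a b : ℕ) : pp W a b = aa W (a + b) := by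
  induction a generalizing b with
  | zero => simpa using pp_zero W b
  | succ c ih =>
      rw [pp_succ]
      rw [ih (b+1)]
      congr 1
      omega

lemma aa_nonneg (k : ℕ) : 0 ≤ aa W k := integral_nonneg (ff_nonneg W k)

lemma aa_le_one (k : ℕ) : aa W k ≤ 1 := by
  calc aa W k ≤ ∫ _, (1:ℝ) ∂mu := integral_mono (ff_integrable W k) (integrable_const 1) (ff_le_one W k)
    _ = 1 := by simp

lemma aa_zero : aa W 0 = 1 := by unfold aa; simp [ff]

/-- Cauchy–Schwarz -/
lemma pp_sq_le (a b : ℕ) : pp W a b ^ 2 ≤ pp W a a * pp W b b := by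
  have key : ∀ u : ℝ, 0 ≤ pp W a a * (u * u) + (2 * pp W a b) * u + pp W b b := by
    intro u
    have h : 0 ≤ ∫ x, (u * ff W a x + ff W b x)^2 ∂mu :=
      integral_nonneg fun x => sq_nonneg _
    have expand : (∫ x, (u * ff W a x + ff W b x)^2 ∂mu)
        = pp W a a * (u * u) + (2 * pp W a b) * u + pp W b b := by
      unfold pp
      have ia : Integrable (fun x => ff W a x * ff W a x) mu :=
        integrable_bd _ ((ff_meas W a).mul (ff_meas W a))
          (fun x => mul_nonneg (ff_nonneg W a x) (ff_nonneg W a x))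
          (fun x => mul_le_one₀ (ff_le_one W a x) (ff_nonneg W a x) (ff_le_one W a x))
      have iab : Integrable (fun x => ff W a x * ff W b x) mu :=
        integrable_bd _ ((ff_meas W a).mul (ff_meas W b))
          (fun x => mul_nonneg (ff_nonneg W a x) (ff_nonneg W b x))
          (fun x => mul_le_one₀ (ff_le_one W a x) (ff_nonneg W b x) (ff_le_one W b x))
      have ib : Integrable (fun x => ff W b x * ff W b x) mu :=
        integrable_bd _ ((ff_meas W b).mul (ff_meas W b))
          (fun x => mul_nonneg (ff_nonneg W b x) (ff_nonneg W b x))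
          (fun x => mul_le_one₀ (ff_le_one W b x) (ff_nonneg W b x) (ff_le_one W b x))
      have : (fun x => (u * ff W a x + ff W b x)^2)
          = fun x => (u * u) * (ff W a x * ff W a x) + (2 * u) * (ff W a x * ff W b x)
              + ff W b x * ff W b x := by
        ext x; ring
      rw [this]
      have e2 : Integrable (fun x => (2*u) * (ff W a x * ff W b x)) mu := iab.const_mul _
      have e0 : Integrable (fun x => (u*u) * (ff W a x * ff W a x)) mu := ia.const_mul _
      have e1 : Integrable (fun x => (u*u) * (ff W a x * ff W a x)
          + (2*u) * (ff W a x * ff W b x)) mu := e0.add e2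
      rw [integral_add e1 ib, integral_add e0 e2, integral_const_mul, integral_const_mul]
      ring
    linarith [h, expand]
  have hd := discrim_le_zero key
  unfold discrim at hd
  nlinarith [hd]

lemma aa_sq_le (k : ℕ) : aa W (2*(k+1)) ^ 2 ≤ aa W (2*k) * aa W (2*(k+2)) := by
  have h1 : aa W (2*(k+1)) = pp W k (k+2) := by rw [pp_eq_aa]; congr 1; omega
  have h2 : aa W (2*k) = pp W k k := by rw [pp_eq_aa]; congr 1; omega
  have h3 : aa W (2*(k+2)) = pp W (k+2) (k+2) := by rw [pp_eq_aa]; congr 1; omega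
  rw [h1, h2, h3]
  exact pp_sq_le W k (k+2)

lemma aa_odd_sq_le (i : ℕ) : aa W (2*i+1) ^ 2 ≤ aa W (2*i) * aa W (2*i+2) := by
  have h1 : aa W (2*i+1) = pp W i (i+1) := by rw [pp_eq_aa]; congr 1; omega
  have h2 : aa W (2*i) = pp W i i := by rw [pp_eq_aa]; congr 1; omega
  have h3 : aa W (2*i+2) = pp W (i+1) (i+1) := by rw [pp_eq_aa]; congr 1; omega
  rw [h1, h2, h3]
  exact pp_sq_le W i (i+1)

end PathDom
namespace PathDom
open MeasureTheory
variable (W : Graphon)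

lemma bE (k : ℕ) : aa W (2*k) ^ (k+1) ≤ aa W (2*(k+1)) ^ k := by
  induction k with
  | zero => simp [aa_zero]
  | succ k ih =>
      rcases eq_or_lt_of_le (aa_nonneg W (2*(k+1))) with h0 | hpos
      · rw [← h0]
        rw [zero_pow (by omega)]
        exact pow_nonneg (aa_nonneg W _) _
      · have hsq := aa_sq_le W k
        have h1 : aa W (2*(k+1)) ^ (2*(k+1)) ≤ aa W (2*k) ^ (k+1) * aa W (2*(k+2)) ^ (k+1) := by
          have h0' : aa W (2*(k+1)) ^ (2*(k+1)) = (aa W (2*(k+1)) ^ 2) ^ (k+1) := by ring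
          rw [h0', ← mul_pow]
          exact pow_le_pow_left₀ (sq_nonneg _) hsq (k+1)
        have h2 : aa W (2*k) ^ (k+1) * aa W (2*(k+2)) ^ (k+1)
            ≤ aa W (2*(k+1)) ^ k * aa W (2*(k+2)) ^ (k+1) :=
          mul_le_mul_of_nonneg_right ih (pow_nonneg (aa_nonneg W _) _)
        have h3 : aa W (2*(k+1)) ^ (2*(k+1)) = aa W (2*(k+1)) ^ k * aa W (2*(k+1)) ^ (k+2) := by
          ring
        have h4 : aa W (2*(k+1)) ^ k * aa W (2*(k+1)) ^ (k+2)
            ≤ aa W (2*(k+1)) ^ k * aa W (2*(k+2)) ^ (k+1) := by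
          calc _ = aa W (2*(k+1)) ^ (2*(k+1)) := h3.symm
            _ ≤ _ := le_trans h1 h2
        have h5 : aa W (2*(k+1)) ^ (k+2) ≤ aa W (2*(k+2)) ^ (k+1) :=
          le_of_mul_le_mul_left (by rw [mul_comm] at h4 ⊢; linarith [h4]) (pow_pos hpos k)
        exact h5

lemma bF {i j : ℕ} (hij : i ≤ j) : aa W (2*i) ^ j ≤ aa W (2*j) ^ i := by
  induction j with
  | zero => interval_cases i; simp [aa_zero]
  | succ j ih =>
      rcases Nat.lt_or_ge i (j+1) with hlt | hge
      · have hij' : i ≤ j := by omega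
        have IH := ih hij'
        rcases Nat.eq_zero_or_pos j with rfl | hj
        · interval_cases i <;> simp [aa_zero]
        · have key : (aa W (2*i) ^ (j+1)) ^ j ≤ (aa W (2*(j+1)) ^ i) ^ j := by
            calc (aa W (2*i) ^ (j+1)) ^ j = (aa W (2*i) ^ j) ^ (j+1) := by
                  ring
              _ ≤ (aa W (2*j) ^ i) ^ (j+1) := pow_le_pow_left₀ (pow_nonneg (aa_nonneg W _) _) IH _
              _ = (aa W (2*j) ^ (j+1)) ^ i := by ring
              _ ≤ (aa W (2*(j+1)) ^ j) ^ i :=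
                  pow_le_pow_left₀ (pow_nonneg (aa_nonneg W _) _) (bE W j) _
              _ = (aa W (2*(j+1)) ^ i) ^ j := by ring
          exact le_of_pow_le_pow_left₀ (by omega) (pow_nonneg (aa_nonneg W _) _) key
      · have : i = j + 1 := by omega
        subst this
        exact le_refl _

lemma moment {m N : ℕ} (hm : m ≤ 2*N) : aa W m ^ (2*N) ≤ aa W (2*N) ^ m := by
  rcases Nat.even_or_odd m with ⟨i, hi⟩ | ⟨i, hi⟩
  · subst hi
    have hiN : i ≤ N := by omega
    have : aa W (i+i) = aa W (2*i) := by ring_nf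
    rw [this]
    calc aa W (2*i) ^ (2*N) = (aa W (2*i) ^ N) ^ 2 := by ring
      _ ≤ (aa W (2*N) ^ i) ^ 2 :=
          pow_le_pow_left₀ (pow_nonneg (aa_nonneg W _) _) (bF W hiN) 2
      _ = aa W (2*N) ^ (i+i) := by ring
  · subst hi
    have hiN : i + 1 ≤ N := by omega
    have hsq := aa_odd_sq_le W i
    have key : (aa W (2*i+1) ^ (2*N)) ^ 2 ≤ (aa W (2*N) ^ (2*i+1)) ^ 2 := by
      calc (aa W (2*i+1) ^ (2*N)) ^ 2 = (aa W (2*i+1) ^ 2) ^ (2*N) := by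
            ring
        _ ≤ (aa W (2*i) * aa W (2*i+2)) ^ (2*N) :=
            pow_le_pow_left₀ (sq_nonneg _) hsq _
        _ = aa W (2*i) ^ (2*N) * aa W (2*(i+1)) ^ (2*N) := by
            rw [mul_pow, show 2*(i+1) = 2*i+2 from by ring]
        _ ≤ ((aa W (2*N))^i)^2 * ((aa W (2*N))^(i+1))^2 := by
            refine mul_le_mul ?_ ?_ (pow_nonneg (aa_nonneg W _) _) (by positivity)
            · calc aa W (2*i) ^ (2*N) = (aa W (2*i) ^ N)^2 := by ring
                _ ≤ _ := pow_le_pow_left₀ (pow_nonneg (aa_nonneg W _) _) (bF W (by omega)) 2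
            · calc aa W (2*(i+1)) ^ (2*N) = (aa W (2*(i+1)) ^ N)^2 := by ring
                _ ≤ _ := pow_le_pow_left₀ (pow_nonneg (aa_nonneg W _) _) (bF W hiN) 2
        _ = (aa W (2*N) ^ (2*i+1)) ^ 2 := by ring
    exact le_of_pow_le_pow_left₀ two_ne_zero (pow_nonneg (aa_nonneg W _) _) key

end PathDom
namespace PathDom
open MeasureTheory Finset

variable (W : Graphon)

noncomputable def piM (n : ℕ) : Measure (Fin n → ℝ) := Measure.pi (fun _ => mu)

instance (n : ℕ) : IsProbabilityMeasure (piM n) := by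
  unfold piM; infer_instance

def ext {n : ℕ} (x : Fin n → ℝ) (i : ℕ) : ℝ := if h : i < n then x ⟨i, h⟩ else 0

lemma ext_meas {n : ℕ} (i : ℕ) : Measurable (fun x : Fin n → ℝ => ext x i) := by
  unfold ext
  rcases Nat.lt_or_ge i n with h | h
  · simp only [dif_pos h]; exact measurable_pi_apply _
  · simp only [dif_neg (Nat.not_lt.2 h)]; exact measurable_const

noncomputable def GG (n k : ℕ) (S : Finset ℕ) : ℝ :=
  ∫ x, ff W k (ext x 0) * ∏ i ∈ S, W.toFun (ext x i) (ext x (i+1)) ∂(piM n)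

lemma gg_meas (n k : ℕ) (S : Finset ℕ) :
    Measurable (fun x : Fin n → ℝ =>
      ff W k (ext x 0) * ∏ i ∈ S, W.toFun (ext x i) (ext x (i+1))) := by
  refine ((ff_meas W k).comp (ext_meas 0)).mul ?_
  refine Finset.measurable_prod _ fun i _ => ?_
  exact W.measurable'.comp ((ext_meas i).prodMk (ext_meas (i+1)))

lemma gg_nonneg (n k : ℕ) (S : Finset ℕ) (x : Fin n → ℝ) :
    0 ≤ ff W k (ext x 0) * ∏ i ∈ S, W.toFun (ext x i) (ext x (i+1)) :=
  mul_nonneg (ff_nonneg W k _) (Finset.prod_nonneg fun i _ => W.nonneg _ _)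

lemma gg_le_one (n k : ℕ) (S : Finset ℕ) (x : Fin n → ℝ) :
    ff W k (ext x 0) * ∏ i ∈ S, W.toFun (ext x i) (ext x (i+1)) ≤ 1 :=
  mul_le_one₀ (ff_le_one W k _)
    (Finset.prod_nonneg fun i _ => W.nonneg _ _)
    (Finset.prod_le_one (fun i _ => W.nonneg _ _) (fun i _ => W.le_one _ _))

lemma GG_nonneg (n k : ℕ) (S : Finset ℕ) : 0 ≤ GG W n k S :=
  integral_nonneg (gg_nonneg W n k S)

lemma GG_zero : GG W 0 0 ∅ = 1 := by
  unfold GG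
  simp [ff, ext]

/-- shift a finset of indices down by one -/
def shiftS (S : Finset ℕ) : Finset ℕ := S.image (· - 1)

section fubini

variable {m : ℕ}

noncomputable def eqv (m : ℕ) : (Fin (m+1) → ℝ) ≃ᵐ ℝ × (Fin m → ℝ) :=
  MeasurableEquiv.piFinSuccAbove (fun _ => ℝ) 0

lemma eqv_symm_apply (y : ℝ) (z : Fin m → ℝ) :
    (eqv m).symm (y, z) = Fin.cons y z := by
  show (Fin.insertNthEquiv (fun _ => ℝ) 0) (y, z) = Fin.cons y z
  simp [Fin.insertNthEquiv, Fin.insertNth_zero']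

lemma eqv_mp (m : ℕ) :
    MeasurePreserving ((eqv m).symm) (mu.prod (piM m)) (piM (m+1)) :=
  (measurePreserving_piFinSuccAbove (fun _ : Fin (m+1) => mu) 0).symm _

lemma ext_cons_zero (y : ℝ) (z : Fin m → ℝ) : ext (Fin.cons y z : Fin (m+1) → ℝ) 0 = y := by
  unfold ext
  simp only [dif_pos (Nat.succ_pos m)]
  exact @Fin.cons_zero m (fun _ => ℝ) y z

lemma ext_cons_succ (y : ℝ) (z : Fin m → ℝ) (i : ℕ) :
    ext (Fin.cons y z : Fin (m+1) → ℝ) (i+1) = ext z i := by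
  unfold ext
  rcases Nat.lt_or_ge i m with h | h
  · rw [dif_pos (by omega : i + 1 < m + 1), dif_pos h]
    exact @Fin.cons_succ m (fun _ => ℝ) y z ⟨i, h⟩
  · rw [dif_neg (by omega), dif_neg (by omega)]

/-- Change of variables: peel off the first coordinate. -/
lemma GG_peel (k : ℕ) (S : Finset ℕ) :
    GG W (m+1) k S = ∫ z, ∫ y, ff W k (ext (Fin.cons y z : Fin (m+1) → ℝ) 0) *
      ∏ i ∈ S, W.toFun (ext (Fin.cons y z : Fin (m+1) → ℝ) i)
        (ext (Fin.cons y z : Fin (m+1) → ℝ) (i+1)) ∂mu ∂(piM m) := by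
  unfold GG
  rw [← (eqv_mp m).integral_comp (MeasurableEquiv.measurableEmbedding _)]
  have h1 : ∀ p : ℝ × (Fin m → ℝ),
      (fun x : Fin (m+1) → ℝ => ff W k (ext x 0) * ∏ i ∈ S,
        W.toFun (ext x i) (ext x (i+1))) ((eqv m).symm p)
      = ff W k (ext (Fin.cons p.1 p.2 : Fin (m+1) → ℝ) 0) * ∏ i ∈ S,
        W.toFun (ext (Fin.cons p.1 p.2 : Fin (m+1) → ℝ) i)
          (ext (Fin.cons p.1 p.2 : Fin (m+1) → ℝ) (i+1)) := by
    intro p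
    rw [show (eqv m).symm p = Fin.cons p.1 p.2 from by
      rw [← eqv_symm_apply]]
  rw [integral_congr_ae (Filter.Eventually.of_forall h1)]
  have hint : Integrable (fun p : ℝ × (Fin m → ℝ) =>
      ff W k (ext (Fin.cons p.1 p.2 : Fin (m+1) → ℝ) 0) * ∏ i ∈ S,
        W.toFun (ext (Fin.cons p.1 p.2 : Fin (m+1) → ℝ) i)
          (ext (Fin.cons p.1 p.2 : Fin (m+1) → ℝ) (i+1))) (mu.prod (piM m)) := by
    have : (fun p : ℝ × (Fin m → ℝ) =>
        ff W k (ext (Fin.cons p.1 p.2 : Fin (m+1) → ℝ) 0) * ∏ i ∈ S,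
          W.toFun (ext (Fin.cons p.1 p.2 : Fin (m+1) → ℝ) i)
            (ext (Fin.cons p.1 p.2 : Fin (m+1) → ℝ) (i+1)))
        = (fun x : Fin (m+1) → ℝ => ff W k (ext x 0) * ∏ i ∈ S,
            W.toFun (ext x i) (ext x (i+1))) ∘ ((eqv m).symm) := by
      funext p
      simp only [Function.comp_apply]
      rw [eqv_symm_apply]
    rw [this]
    exact integrable_bd _ ((gg_meas W (m+1) k S).comp (eqv m).symm.measurable)
      (fun p => gg_nonneg W (m+1) k S _) (fun p => gg_le_one W (m+1) k S _)
  exact (integral_prod _ hint).trans (integral_integral_swap hint)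
end fubini
end PathDom
namespace PathDom
open MeasureTheory Finset

variable (W : Graphon) {m : ℕ}

lemma ff_step (k : ℕ) (c : ℝ) : ∫ y, ff W k y * W.toFun y c ∂mu = ff W (k+1) c := by
  show _ = ∫ y, W.toFun c y * ff W k y ∂mu
  congr 1
  funext y
  rw [W.symm c y, mul_comm]

lemma inner_int (k : ℕ) (c : ℝ) : Integrable (fun y => ff W k y * W.toFun y c) mu := by
  refine integrable_bd _ ((ff_meas W k).mul
    (W.measurable'.comp (measurable_id.prodMk measurable_const))) ?_ ?_
  · exact fun y => mul_nonneg (ff_nonneg W k y) (W.nonneg _ _)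
  · exact fun y => mul_le_one₀ (ff_le_one W k y) (W.nonneg _ _) (W.le_one _ _)

lemma prod_shift (S : Finset ℕ) (h0 : 0 ∉ S) (y : ℝ) (z : Fin m → ℝ) :
    ∏ i ∈ S, W.toFun (ext (Fin.cons y z : Fin (m+1) → ℝ) i)
        (ext (Fin.cons y z : Fin (m+1) → ℝ) (i+1))
    = ∏ j ∈ shiftS S, W.toFun (ext z j) (ext z (j+1)) := by
  unfold shiftS
  rw [Finset.prod_image (fun i hi => by
    intro i' hi' hii'
    have h1 : 1 ≤ i := Nat.one_le_iff_ne_zero.2 (fun h => h0 (h ▸ hi))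
    have h2 : 1 ≤ i' := Nat.one_le_iff_ne_zero.2 (fun h => h0 (h ▸ hi'))
    omega)]
  refine Finset.prod_congr rfl fun i hi => ?_
  have h1 : 1 ≤ i := Nat.one_le_iff_ne_zero.2 (fun h => h0 (h ▸ hi))
  obtain ⟨j, rfl⟩ : ∃ j, i = j + 1 := ⟨i - 1, by omega⟩
  rw [ext_cons_succ, ext_cons_succ]
  simp

lemma GG_step_mem (k : ℕ) (S : Finset ℕ) (h0 : 0 ∈ S) :
    GG W (m+1) k S = GG W m (k+1) (shiftS (S.erase 0)) := by
  rw [GG_peel]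
  unfold GG
  refine integral_congr_ae (Filter.Eventually.of_forall fun z => ?_)
  have hsplit : ∀ y : ℝ,
      ff W k (ext (Fin.cons y z : Fin (m+1) → ℝ) 0) *
        ∏ i ∈ S, W.toFun (ext (Fin.cons y z : Fin (m+1) → ℝ) i)
          (ext (Fin.cons y z : Fin (m+1) → ℝ) (i+1))
      = (ff W k y * W.toFun y (ext z 0)) *
          ∏ j ∈ shiftS (S.erase 0), W.toFun (ext z j) (ext z (j+1)) := by
    intro y
    rw [← Finset.mul_prod_erase S _ h0]
    rw [prod_shift W (S.erase 0) (Finset.notMem_erase 0 S) y z]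
    rw [ext_cons_zero]
    have : ext (Fin.cons y z : Fin (m+1) → ℝ) (0+1) = ext z 0 := ext_cons_succ y z 0
    rw [this]
    ring
  simp_rw [hsplit]
  rw [integral_mul_const, ff_step]

lemma GG_step_not (k : ℕ) (S : Finset ℕ) (h0 : 0 ∉ S) :
    GG W (m+1) k S = aa W k * GG W m 0 (shiftS S) := by
  rw [GG_peel]
  have hsplit : ∀ (z : Fin m → ℝ) (y : ℝ),
      ff W k (ext (Fin.cons y z : Fin (m+1) → ℝ) 0) *
        ∏ i ∈ S, W.toFun (ext (Fin.cons y z : Fin (m+1) → ℝ) i)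
          (ext (Fin.cons y z : Fin (m+1) → ℝ) (i+1))
      = ff W k y * ∏ j ∈ shiftS S, W.toFun (ext z j) (ext z (j+1)) := by
    intro z y
    rw [prod_shift W S h0 y z, ext_cons_zero]
  simp_rw [hsplit]
  have : ∀ z : Fin m → ℝ,
      ∫ y, ff W k y * ∏ j ∈ shiftS S, W.toFun (ext z j) (ext z (j+1)) ∂mu
      = aa W k * ∏ j ∈ shiftS S, W.toFun (ext z j) (ext z (j+1)) := by
    intro z
    rw [integral_mul_const]
    rfl
  simp_rw [this]
  rw [integral_const_mul]
  unfold GG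
  congr 1
  refine integral_congr_ae (Filter.Eventually.of_forall fun z => ?_)
  show _ = ff W 0 (ext z 0) * _
  show _ = 1 * _
  rw [one_mul]

lemma shiftS_erase_range (m : ℕ) : shiftS ((Finset.range (m+1)).erase 0) = Finset.range m := by
  unfold shiftS
  ext j
  simp only [Finset.mem_image, Finset.mem_erase, Finset.mem_range]
  constructor
  · rintro ⟨i, ⟨h1, h2⟩, rfl⟩; omega
  · intro hj; exact ⟨j+1, ⟨by omega, by omega⟩, by omega⟩

lemma GG_path : ∀ m k : ℕ, GG W (m+1) k (Finset.range m) = aa W (k + m) := by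
  intro m
  induction m with
  | zero =>
      intro k
      rw [show Finset.range 0 = (∅ : Finset ℕ) from rfl]
      rw [GG_step_not W k ∅ (by simp)]
      rw [show shiftS ∅ = ∅ from rfl, GG_zero]
      simp
  | succ m ih =>
      intro k
      rw [GG_step_mem W k _ (by simp [Finset.mem_range]), shiftS_erase_range, ih (k+1)]
      exact congrArg (aa W) (by omega)

lemma shiftS_card (S : Finset ℕ) (h0 : 0 ∉ S) : (shiftS S).card = S.card := by
  unfold shiftS
  refine Finset.card_image_of_injOn fun i hi i' hi' h => ?_
  have h1 : 1 ≤ i := Nat.one_le_iff_ne_zero.2 (fun h => h0 (h ▸ hi))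
  have h2 : 1 ≤ i' := Nat.one_le_iff_ne_zero.2 (fun h => h0 (h ▸ hi'))
  omega

lemma shiftS_subset {S : Finset ℕ} {m : ℕ} (h0 : 0 ∉ S) (hS : S ⊆ Finset.range (m+1)) :
    shiftS S ⊆ Finset.range m := by
  intro j hj
  simp only [shiftS, Finset.mem_image] at hj
  obtain ⟨i, hi, rfl⟩ := hj
  have h1 := hS hi
  have h2 : i ≠ 0 := fun h => h0 (h ▸ hi)
  simp only [Finset.mem_range] at h1 ⊢
  omega

/-- Main bound: `GG n k S ^ N ≤ aa N ^ (k + |S|)` for even `N`. -/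
lemma GG_bound (N' : ℕ) : ∀ n k : ℕ, ∀ S : Finset ℕ, S ⊆ Finset.range n →
    k + S.card ≤ 2*N' → GG W (n+1) k S ^ (2*N') ≤ aa W (2*N') ^ (k + S.card) := by
  intro n
  induction n with
  | zero =>
      intro k S hS hcard
      have hS0 : S = ∅ := Finset.subset_empty.1 (by simpa using hS)
      subst hS0
      rw [GG_step_not W k ∅ (by simp), show shiftS ∅ = ∅ from rfl, GG_zero, mul_one]
      simpa using moment W (by simpa using hcard)
  | succ n ih =>
      intro k S hS hcard
      by_cases h0 : 0 ∈ S
      · rw [GG_step_mem W k S h0]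
        have hsub : shiftS (S.erase 0) ⊆ Finset.range n := by
          refine shiftS_subset (Finset.notMem_erase 0 S) ?_
          intro i hi
          exact Finset.mem_of_mem_erase hi |> hS
        have hcard' : (shiftS (S.erase 0)).card = S.card - 1 := by
          rw [shiftS_card _ (Finset.notMem_erase 0 S), Finset.card_erase_of_mem h0]
        have h1 : 1 ≤ S.card := Finset.card_pos.2 ⟨0, h0⟩
        have := ih (k+1) (shiftS (S.erase 0)) hsub (by omega)
        rw [hcard'] at this
        calc GG W (n+1) (k+1) (shiftS (S.erase 0)) ^ (2*N')
            ≤ aa W (2*N') ^ (k + 1 + (S.card - 1)) := this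
          _ = aa W (2*N') ^ (k + S.card) := by congr 1; omega
      · rw [GG_step_not W k S h0]
        have hsub : shiftS S ⊆ Finset.range n := shiftS_subset h0 hS
        have hcard' : (shiftS S).card = S.card := shiftS_card S h0
        have h2 := ih 0 (shiftS S) hsub (by omega)
        rw [hcard'] at h2
        simp only [Nat.zero_add] at h2
        rw [mul_pow]
        calc aa W k ^ (2*N') * GG W (n+1) 0 (shiftS S) ^ (2*N')
            ≤ aa W (2*N') ^ k * aa W (2*N') ^ S.card := by
              refine mul_le_mul (moment W (by omega)) h2 (pow_nonneg (GG_nonneg W _ _ _) _)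
                (pow_nonneg (aa_nonneg W _) _)
          _ = aa W (2*N') ^ (k + S.card) := by rw [← pow_add]

end PathDom
namespace PathDom
open MeasureTheory Finset

variable (W : Graphon)

/-- restriction of the cube = product of restrictions -/
lemma restrict_cube (V : Type) [Fintype V] :
    (volume : Measure (V → ℝ)).restrict (Set.univ.pi fun _ : V => Set.Icc (0:ℝ) 1)
      = Measure.pi (fun _ : V => mu) := by
  refine (Measure.pi_eq fun t ht => ?_).symm
  rw [Measure.restrict_apply (MeasurableSet.pi Set.countable_univ fun i _ => ht i)]
  rw [← Set.pi_inter_distrib]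
  rw [volume_pi]
  rw [Measure.pi_pi]
  refine Finset.prod_congr rfl fun v _ => ?_
  rw [mu, Measure.restrict_apply (ht v)]

lemma lift_meas (V : Type) [Fintype V] (J : Finset (Sym2 V)) :
    Measurable (fun x : V → ℝ => ∏ e ∈ J,
      Sym2.lift ⟨fun i j => W.toFun (x i) (x j), fun i j => W.symm (x i) (x j)⟩ e) := by
  refine Finset.measurable_prod _ fun e _ => ?_
  induction e using Sym2.ind with
  | _ a b =>
      simp only [Sym2.lift_mk]
      have h1 : Measurable (fun x : V → ℝ => (x a, x b)) :=
        (measurable_pi_apply a).prodMk (measurable_pi_apply b)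
      exact W.measurable'.comp h1

lemma lift_nonneg (V : Type) [Fintype V] (J : Finset (Sym2 V)) (x : V → ℝ) :
    0 ≤ ∏ e ∈ J, Sym2.lift ⟨fun i j => W.toFun (x i) (x j), fun i j => W.symm (x i) (x j)⟩ e := by
  refine Finset.prod_nonneg fun e _ => ?_
  induction e using Sym2.ind with
  | _ a b => simp only [Sym2.lift_mk]; exact W.nonneg _ _

lemma lift_le_one (V : Type) [Fintype V] (J : Finset (Sym2 V)) (x : V → ℝ) :
    (∏ e ∈ J, Sym2.lift ⟨fun i j => W.toFun (x i) (x j), fun i j => W.symm (x i) (x j)⟩ e) ≤ 1 := by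
  refine Finset.prod_le_one (fun e _ => ?_) (fun e _ => ?_)
  · induction e using Sym2.ind with
    | _ a b => simp only [Sym2.lift_mk]; exact W.nonneg _ _
  · induction e using Sym2.ind with
    | _ a b => simp only [Sym2.lift_mk]; exact W.le_one _ _

/-- pushforward of pi measure under precomposition with an injection -/
lemma map_precomp {V₁ V₂ : Type} [Fintype V₁] [Fintype V₂] {g : V₁ → V₂}
    (hg : Function.Injective g) :
    Measure.map (fun x : V₂ → ℝ => x ∘ g) (Measure.pi fun _ : V₂ => mu)
      = Measure.pi (fun _ : V₁ => mu) := by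
  classical
  refine (Measure.pi_eq fun t ht => ?_).symm
  have hmeas : Measurable (fun x : V₂ → ℝ => x ∘ g) :=
    measurable_pi_lambda _ fun a => measurable_pi_apply (g a)
  rw [Measure.map_apply hmeas (MeasurableSet.pi Set.countable_univ fun i _ => ht i)]
  have hpre : (fun x : V₂ → ℝ => x ∘ g) ⁻¹' (Set.univ.pi t)
      = Set.univ.pi (fun w : V₂ => if h : ∃ v, g v = w then t h.choose else Set.univ) := by
    ext x
    simp only [Set.mem_preimage, Set.mem_pi, Set.mem_univ, forall_true_left, true_implies]
    constructor
    · intro hx w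
      by_cases h : ∃ v, g v = w
      · rw [dif_pos h]
        have := hx h.choose
        simp only [Function.comp_apply] at this
        rwa [h.choose_spec] at this
      · rw [dif_neg h]; trivial
    · intro hx v
      have h2 := hx (g v)
      rw [dif_pos ⟨v, rfl⟩] at h2
      have he : (⟨v, rfl⟩ : ∃ v', g v' = g v).choose = v := hg (⟨v, rfl⟩ : ∃ v', g v' = g v).choose_spec
      rw [he] at h2
      simpa using h2
  rw [hpre, Measure.pi_pi]
  rw [← Finset.prod_subset (Finset.subset_univ (Finset.univ.image g))
    (fun w _ hw => by
      rw [dif_neg]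
      · exact measure_univ
      · intro ⟨v, hv⟩
        exact hw (Finset.mem_image.2 ⟨v, Finset.mem_univ v, hv⟩))]
  rw [Finset.prod_image (fun a _ b _ h => hg h)]
  refine Finset.prod_congr rfl fun v _ => ?_
  rw [dif_pos ⟨v, rfl⟩]
  have he : (⟨v, rfl⟩ : ∃ v', g v' = g v).choose = v := hg (⟨v, rfl⟩ : ∃ v', g v' = g v).choose_spec
  rw [he]

end PathDom
namespace PathDom
open MeasureTheory Finset

variable (W : Graphon)

def idx {n : ℕ} : Sym2 (Fin n) → ℕ := Sym2.lift ⟨fun a b => min a.1 b.1, fun a b => min_comm _ _⟩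

lemma path_edge {n : ℕ} {e : Sym2 (Fin n)} (he : e ∈ (SimpleGraph.pathGraph n).edgeSet) :
    ∃ a b : Fin n, e = s(a, b) ∧ (a:ℕ) + 1 = (b:ℕ) ∧ idx e = (a:ℕ) := by
  induction e using Sym2.ind with
  | _ u v =>
      rw [SimpleGraph.mem_edgeSet, SimpleGraph.pathGraph_adj] at he
      rcases he with h | h
      · refine ⟨u, v, rfl, h, ?_⟩
        simp only [idx, Sym2.lift_mk]
        omega
      · refine ⟨v, u, Sym2.eq_swap, h, ?_⟩
        simp only [idx, Sym2.lift_mk]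
        omega

lemma idx_lt {n : ℕ} {e : Sym2 (Fin n)} (he : e ∈ (SimpleGraph.pathGraph n).edgeSet) :
    idx e + 1 < n := by
  obtain ⟨a, b, rfl, hab, hidx⟩ := path_edge he
  rw [hidx]
  have := b.isLt
  omega

lemma idx_inj {n : ℕ} {e e' : Sym2 (Fin n)} (he : e ∈ (SimpleGraph.pathGraph n).edgeSet)
    (he' : e' ∈ (SimpleGraph.pathGraph n).edgeSet) (h : idx e = idx e') : e = e' := by
  obtain ⟨a, b, rfl, hab, hidx⟩ := path_edge he
  obtain ⟨a', b', rfl, hab', hidx'⟩ := path_edge he'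
  rw [hidx, hidx'] at h
  have ha : a = a' := Fin.ext h
  have hb : b = b' := Fin.ext (by omega)
  rw [ha, hb]

lemma homDensity_eq_GG {V' : Type} [Fintype V'] {n : ℕ} (H' : SimpleGraph V')
    (g : H' →g SimpleGraph.pathGraph n) (hg : Function.Injective g) :
    ∃ S : Finset ℕ, S ⊆ Finset.range (n-1) ∧ S.card = H'.edgeCard ∧
      (∀ e ∈ H'.edgeSet.toFinset, idx (Sym2.map g e) ∈ S) ∧
      homDensity H' W = GG W n 0 S := by
  classical
  set E' : Finset (Sym2 (Fin n)) := H'.edgeSet.toFinset.image (Sym2.map g) with hE'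
  have hE'path : ∀ e ∈ E', e ∈ (SimpleGraph.pathGraph n).edgeSet := by
    intro e he
    rw [hE', Finset.mem_image] at he
    obtain ⟨e₀, he₀, rfl⟩ := he
    rw [Set.mem_toFinset] at he₀
    exact SimpleGraph.Hom.map_mem_edgeSet g he₀
  refine ⟨E'.image idx, ?_, ?_, ?_, ?_⟩
  · intro i hi
    rw [Finset.mem_image] at hi
    obtain ⟨e, he, rfl⟩ := hi
    have := idx_lt (hE'path e he)
    rw [Finset.mem_range]
    omega
  · rw [Finset.card_image_of_injOn (fun e he e' he' h => idx_inj (hE'path e he) (hE'path e' he') h)]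
    rw [hE', Finset.card_image_of_injective _ (Sym2.map.injective hg)]
    rfl
  · intro e he
    refine Finset.mem_image.2 ⟨Sym2.map g e, ?_, rfl⟩
    rw [hE']
    exact Finset.mem_image.2 ⟨e, he, rfl⟩
  · -- main computation
    unfold homDensity
    rw [restrict_cube]
    rw [← map_precomp hg]
    have hphi : Measurable (fun x : Fin n → ℝ => x ∘ (g : V' → Fin n)) :=
      measurable_pi_lambda _ fun a => measurable_pi_apply _
    rw [integral_map hphi.aemeasurable
      ((lift_meas W V' H'.edgeSet.toFinset).aestronglyMeasurable)]
    unfold GG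
    refine integral_congr_ae (Filter.Eventually.of_forall fun x => ?_)
    dsimp only
    rw [show ff W 0 (ext x 0) = 1 from rfl, one_mul]
    have step1 : ∏ e ∈ H'.edgeSet.toFinset,
        Sym2.lift ⟨fun i j => W.toFun ((x ∘ g) i) ((x ∘ g) j),
          fun i j => W.symm _ _⟩ e
        = ∏ e ∈ E', Sym2.lift ⟨fun i j => W.toFun (x i) (x j), fun i j => W.symm _ _⟩ e := by
      rw [hE', Finset.prod_image (fun e _ e' _ h => Sym2.map.injective hg h)]
      refine Finset.prod_congr rfl fun e _ => ?_
      induction e using Sym2.ind with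
      | _ a b => simp [Sym2.map_pair_eq, Sym2.lift_mk]
    rw [step1]
    rw [Finset.prod_image (fun e he e' he' h => idx_inj (hE'path e he) (hE'path e' he') h)]
    refine Finset.prod_congr rfl fun e he => ?_
    obtain ⟨a, b, rfl, hab, hidx⟩ := path_edge (hE'path e he)
    rw [hidx, Sym2.lift_mk]
    have h1 : ext x (a:ℕ) = x a := by
      unfold ext
      rw [dif_pos a.isLt]
    have h2 : ext x ((a:ℕ)+1) = x b := by
      unfold ext
      rw [dif_pos (by omega : (a:ℕ)+1 < n)]
      have hb : (⟨(a:ℕ)+1, by omega⟩ : Fin n) = b := Fin.ext (by simpa using hab)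
      rw [hb]
    rw [h1, h2]

lemma range_sub_image {m : ℕ} :
    ∀ S : Finset ℕ, S ⊆ Finset.range (m-1) → S.card = m - 1 → S = Finset.range (m-1) :=
  fun S hsub hcard => Finset.eq_of_subset_of_card_le hsub (by rw [hcard, Finset.card_range])

lemma edgeCard_path (m : ℕ) : (SimpleGraph.pathGraph m).edgeCard = m - 1 := by
  classical
  let W : Graphon := ⟨fun _ _ => 0, fun _ _ => rfl, measurable_const,
    fun _ _ => le_refl 0, fun _ _ => zero_le_one⟩
  have hinj : Function.Injective (SimpleGraph.Hom.id : SimpleGraph.pathGraph m →g _) :=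
    fun a b h => h
  obtain ⟨S, hsub, hcard, hmem, _⟩ := homDensity_eq_GG W (SimpleGraph.pathGraph m)
    SimpleGraph.Hom.id hinj
  -- show S = range (m-1) by proving reverse inclusion
  have hrange : Finset.range (m-1) ⊆ S := by
    intro i hi
    rw [Finset.mem_range] at hi
    have hlt1 : i < m := by omega
    have hlt2 : i + 1 < m := by omega
    set e : Sym2 (Fin m) := s(⟨i, hlt1⟩, ⟨i+1, hlt2⟩) with he
    have hedge : e ∈ (SimpleGraph.pathGraph m).edgeSet.toFinset := by
      rw [Set.mem_toFinset, he, SimpleGraph.mem_edgeSet, SimpleGraph.pathGraph_adj]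
      left; rfl
    have := hmem e hedge
    have hmap : Sym2.map (SimpleGraph.Hom.id : SimpleGraph.pathGraph m →g _) e = e := by
      rw [he]
      rfl
    rw [hmap] at this
    have hidx : idx e = i := by
      rw [he]
      simp only [idx, Sym2.lift_mk]
      omega
    rwa [hidx] at this
  have : S = Finset.range (m-1) :=
    Finset.Subset.antisymm hsub hrange
  rw [← hcard, this, Finset.card_range]

end PathDom
namespace PathDom
open MeasureTheory Finset

variable (W : Graphon)

lemma homDensity_path {m : ℕ} (hm : 1 ≤ m) :
    homDensity (SimpleGraph.pathGraph m) W = aa W (m-1) := by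
  classical
  have hinj : Function.Injective (SimpleGraph.Hom.id : SimpleGraph.pathGraph m →g _) :=
    fun a b h => h
  obtain ⟨S, hsub, hcard, hmem, heq⟩ := homDensity_eq_GG W (SimpleGraph.pathGraph m)
    SimpleGraph.Hom.id hinj
  have hrange : Finset.range (m-1) ⊆ S := by
    intro i hi
    rw [Finset.mem_range] at hi
    have hlt1 : i < m := by omega
    have hlt2 : i + 1 < m := by omega
    set e : Sym2 (Fin m) := s(⟨i, hlt1⟩, ⟨i+1, hlt2⟩) with he
    have hedge : e ∈ (SimpleGraph.pathGraph m).edgeSet.toFinset := by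
      rw [Set.mem_toFinset, he, SimpleGraph.mem_edgeSet, SimpleGraph.pathGraph_adj]
      left; rfl
    have hmm := hmem e hedge
    have hmap : Sym2.map (SimpleGraph.Hom.id : SimpleGraph.pathGraph m →g _) e = e := by
      rw [he]; rfl
    rw [hmap] at hmm
    have hidx : idx e = i := by
      rw [he]; simp only [idx, Sym2.lift_mk]; omega
    rwa [hidx] at hmm
  have hSr : S = Finset.range (m-1) := Finset.Subset.antisymm hsub hrange
  rw [heq, hSr]
  obtain ⟨m', rfl⟩ : ∃ m', m = m' + 1 := ⟨m - 1, by omega⟩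
  have : m' + 1 - 1 = m' := by omega
  rw [this]
  rw [GG_path W m' 0, Nat.zero_add]

lemma homDensity_nonneg {V' : Type} [Fintype V'] (H' : SimpleGraph V') :
    0 ≤ homDensity H' W := by
  unfold homDensity
  exact setIntegral_nonneg (MeasurableSet.pi Set.countable_univ fun i _ => measurableSet_Icc)
    (fun x _ => lift_nonneg W V' _ x)

lemma rpow_trick {x y : ℝ} (hx : 0 ≤ x) (hy : 0 ≤ y) {a b : ℕ} (ha : 1 ≤ a) (hb : 1 ≤ b)
    (h : x ^ b ≤ y ^ a) : x ^ ((1:ℝ)/(a:ℝ)) ≤ y ^ ((1:ℝ)/(b:ℝ)) := by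
  have hab : (0:ℝ) < (a:ℝ) * (b:ℝ) := by positivity
  have h1 : x ^ ((1:ℝ)/(a:ℝ)) = ((x ^ b : ℝ)) ^ ((1:ℝ)/((a:ℝ)*(b:ℝ))) := by
    rw [← Real.rpow_natCast x b, ← Real.rpow_mul hx]
    congr 1
    field_simp
  have h2 : y ^ ((1:ℝ)/(b:ℝ)) = ((y ^ a : ℝ)) ^ ((1:ℝ)/((a:ℝ)*(b:ℝ))) := by
    rw [← Real.rpow_natCast y a, ← Real.rpow_mul hy]
    congr 1
    field_simp
  rw [h1, h2]
  exact Real.rpow_le_rpow (pow_nonneg hx _) h (by positivity)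

/-- the key domination statement -/
lemma dominates_main {N' : ℕ} :
    IsDominating (SimpleGraph.pathGraph (2*N'+1)) := by
  intro V' _ H' hsub hE W
  obtain ⟨g, hginj⟩ := hsub
  obtain ⟨S, hsubS, hcard, _, heq⟩ := homDensity_eq_GG W H' g hginj
  have hn1 : 2*N'+1-1 = 2*N' := by omega
  rw [hn1] at hsubS
  rcases Nat.eq_zero_or_pos N' with rfl | hN'
  · -- no edges possible
    exfalso
    have : S = ∅ := Finset.subset_empty.1 (by simpa using hsubS)
    rw [this] at hcard
    simp at hcard
    omega
  · have hScard : S.card ≤ 2*N' := by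
      calc S.card ≤ (Finset.range (2*N')).card := Finset.card_le_card hsubS
        _ = 2*N' := Finset.card_range _
    have hbound := GG_bound W N' (2*N') 0 S hsubS (by omega)
    simp only [Nat.zero_add] at hbound
    have hpathden : homDensity (SimpleGraph.pathGraph (2*N'+1)) W = aa W (2*N') := by
      rw [homDensity_path W (by omega), hn1]
    have hedgeC : (SimpleGraph.pathGraph (2*N'+1)).edgeCard = 2*N' := by
      rw [edgeCard_path]
      exact hn1
    rw [heq, hpathden, hedgeC, ← hcard]
    refine rpow_trick (GG_nonneg W _ _ _) (aa_nonneg W _) (by omega) (by omega) ?_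
    exact hbound

end PathDom

theorem stmt13 (n : ℕ) (hn : Odd n) :
    IsDominating (SimpleGraph.pathGraph n) ∧
      ∀ m : ℕ, 2 ≤ m → m ≤ n → ∀ W : Graphon,
        homDensity (SimpleGraph.pathGraph m) W ^ ((1 : ℝ) / ((m : ℝ) - 1)) ≤
          homDensity (SimpleGraph.pathGraph n) W ^ ((1 : ℝ) / ((n : ℝ) - 1)) := by
  obtain ⟨N', rfl⟩ : ∃ N', n = 2*N'+1 := by
    obtain ⟨k, hk⟩ := hn; exact ⟨k, by omega⟩
  refine ⟨PathDom.dominates_main, ?_⟩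
  intro m hm2 hmn W
  -- build the embedding of pathGraph m into pathGraph n
  have hmle : m ≤ 2*N'+1 := hmn
  let g : SimpleGraph.pathGraph m →g SimpleGraph.pathGraph (2*N'+1) :=
    { toFun := fun i => ⟨i.1, by omega⟩
      map_rel' := by
        intro a b hab
        rw [SimpleGraph.pathGraph_adj] at hab ⊢
        simpa using hab }
  have hginj : Function.Injective g := by
    intro a b h
    have h2 := congrArg Fin.val h
    exact Fin.ext h2
  have hdom := PathDom.dominates_main (V' := Fin m) (SimpleGraph.pathGraph m)
    ⟨g, hginj⟩ (by rw [PathDom.edgeCard_path]; omega) W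
  have hc1 : ((SimpleGraph.pathGraph m).edgeCard : ℝ) = (m:ℝ) - 1 := by
    rw [PathDom.edgeCard_path]
    have : (1:ℕ) ≤ m := by omega
    push_cast [Nat.cast_sub this]
    ring
  have hc2 : ((SimpleGraph.pathGraph (2*N'+1)).edgeCard : ℝ) = ((2*N'+1 : ℕ):ℝ) - 1 := by
    rw [PathDom.edgeCard_path]
    push_cast
    ring
  rw [hc1, hc2] at hdom
  convert hdom using 3 <;> push_cast <;> ring
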